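/- Let (X, 𝒜) be a measurable space, μ a probability measure on X, g : X → [0, ∞) measurable with ∫ g dμ = 1, and G : X → X measurable. Let ν be the measure defined by ν(A) := ∫ g(x) 1_A(G(x)) dμ(x), and set Z' := ∫ (1 − g)_+ dμ; assume Z' > 0. Then Z' = ∫ (g − 1)_+ dμ, ν is a probability measure, and the measure γ on X × X defined by γ := (pushforward of the measure min(1,g)·μ under x ↦ (x, G(x))) + Z'^{−1} · (pushforward of the product measure ((1−g)_+·μ) ⊗ ((g−1)_+·μ) under (x,y) ↦ (x, G(y))) is a probability measure whose first marginal is μ and whose second marginal is ν. -/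
import Mathlib


open MeasureTheory
noncomputable section

/-- diagonal concentration coupling, after Saksman–Webb: given a
probability measure `μ`, a nonnegative weight `g` with `∫ g dμ = 1` and a measurable map
`G`, the measure `ν(A) := ∫ g(x) 1_A(G(x)) dμ(x)` is a probability measure, the positive
and negative parts of `g − 1` have equal `μ`-integrals, and the explicit
diagonal-plus-product measure `γ` is a coupling of `μ` and `ν`. -/
theorem diagonal_coupling
    {X : Type*} [MeasurableSpace X] (μ : Measure X) [IsProbabilityMeasure μ]
    (g : X → ℝ) (hg0 : ∀ x, 0 ≤ g x) (hgm : Measurable g)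
    (hgi : Integrable g μ) (hg1 : ∫ x, g x ∂μ = 1)
    (G : X → X) (hG : Measurable G)
    (ν : Measure X)
    (hν : ν = Measure.map G (μ.withDensity fun x => ENNReal.ofReal (g x)))
    (Z' : ℝ) (hZ'def : Z' = ∫ x, max (1 - g x) 0 ∂μ) (hZ' : 0 < Z')
    (γ : Measure (X × X))
    (hγ : γ =
      Measure.map (fun x => (x, G x))
        (μ.withDensity fun x => ENNReal.ofReal (min 1 (g x))) +
      (ENNReal.ofReal Z')⁻¹ •
        Measure.map (fun p : X × X => (p.1, G p.2))
          ((μ.withDensity fun x => ENNReal.ofReal (max (1 - g x) 0)).prod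
            (μ.withDensity fun x => ENNReal.ofReal (max (g x - 1) 0)))) :
    Z' = ∫ x, max (g x - 1) 0 ∂μ ∧
    IsProbabilityMeasure ν ∧
    IsProbabilityMeasure γ ∧
    γ.map Prod.fst = μ ∧ γ.map Prod.snd = ν := by
  -- integrability of the positive/negative parts
  have h21 : Integrable (fun x => max (1 - g x) 0) μ := by
    refine (integrable_const (1:ℝ)).mono'
      (((measurable_const.sub hgm).max measurable_const).aestronglyMeasurable) ?_
    filter_upwards with x
    rw [Real.norm_eq_abs, abs_of_nonneg (le_max_right _ _)]
    have := hg0 x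
    exact max_le (by linarith) (by norm_num)
  have h31 : Integrable (fun x => max (g x - 1) 0) μ := by
    refine hgi.mono' (((hgm.sub measurable_const).max measurable_const).aestronglyMeasurable) ?_
    filter_upwards with x
    rw [Real.norm_eq_abs, abs_of_nonneg (le_max_right _ _)]
    exact max_le (by linarith) (hg0 x)
  -- Z' equals the integral of (g-1)₊
  have hZeq : Z' = ∫ x, max (g x - 1) 0 ∂μ := by
    have key : ∫ x, (max (g x - 1) 0 - max (1 - g x) 0) ∂μ
        = (∫ x, max (g x - 1) 0 ∂μ) - Z' := by
      rw [integral_sub h31 h21, hZ'def]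
    have hpt : (fun x => max (g x - 1) 0 - max (1 - g x) 0) = fun x => g x - 1 := by
      funext x
      rcases le_total (g x) 1 with h | h
      · rw [max_eq_right (by linarith), max_eq_left (by linarith)]; ring
      · rw [max_eq_left (by linarith), max_eq_right (by linarith)]; ring
    rw [hpt, integral_sub hgi (integrable_const 1), hg1] at key
    simp at key
    linarith
  -- densities
  set f1 : X → ENNReal := fun x => ENNReal.ofReal (min 1 (g x)) with hf1
  set f2 : X → ENNReal := fun x => ENNReal.ofReal (max (1 - g x) 0) with hf2
  set f3 : X → ENNReal := fun x => ENNReal.ofReal (max (g x - 1) 0) with hf3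
  have hf1m : Measurable f1 := (measurable_const.min hgm).ennreal_ofReal
  have hf2m : Measurable f2 := ((measurable_const.sub hgm).max measurable_const).ennreal_ofReal
  have hf3m : Measurable f3 := ((hgm.sub measurable_const).max measurable_const).ennreal_ofReal
  -- masses
  have hμ2mass : (μ.withDensity f2) Set.univ = ENNReal.ofReal Z' := by
    rw [withDensity_apply _ MeasurableSet.univ, setLIntegral_univ,
      ← ofReal_integral_eq_lintegral_ofReal h21 (ae_of_all _ fun x => le_max_right _ _), hZ'def]
  have hμ3mass : (μ.withDensity f3) Set.univ = ENNReal.ofReal Z' := by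
    rw [withDensity_apply _ MeasurableSet.univ, setLIntegral_univ,
      ← ofReal_integral_eq_lintegral_ofReal h31 (ae_of_all _ fun x => le_max_right _ _), hZeq]
  have hgmass : (μ.withDensity fun x => ENNReal.ofReal (g x)) Set.univ = 1 := by
    rw [withDensity_apply _ MeasurableSet.univ, setLIntegral_univ,
      ← ofReal_integral_eq_lintegral_ofReal hgi (ae_of_all _ hg0), hg1, ENNReal.ofReal_one]
  have h2fin : IsFiniteMeasure (μ.withDensity f2) :=
    ⟨by rw [hμ2mass]; exact ENNReal.ofReal_lt_top⟩
  have h3fin : IsFiniteMeasure (μ.withDensity f3) :=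
    ⟨by rw [hμ3mass]; exact ENNReal.ofReal_lt_top⟩
  -- density identities
  have hμ12 : μ.withDensity f1 + μ.withDensity f2 = μ := by
    rw [← withDensity_add_left hf1m]
    have : (f1 + f2) = 1 := by
      funext x
      simp only [Pi.add_apply, hf1, hf2, Pi.one_apply]
      rw [← ENNReal.ofReal_add (le_min (by norm_num) (hg0 x)) (le_max_right _ _)]
      rcases le_total (g x) 1 with h | h
      · rw [min_eq_right h, max_eq_left (by linarith)]
        simp
      · rw [min_eq_left h, max_eq_right (by linarith)]
        simp
    rw [this, withDensity_one]
  have hμ13 : μ.withDensity f1 + μ.withDensity f3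
      = μ.withDensity fun x => ENNReal.ofReal (g x) := by
    rw [← withDensity_add_left hf1m]
    congr 1
    funext x
    simp only [Pi.add_apply, hf1, hf3]
    rw [← ENNReal.ofReal_add (le_min (by norm_num) (hg0 x)) (le_max_right _ _)]
    rcases le_total (g x) 1 with h | h
    · rw [min_eq_right h, max_eq_right (by linarith)]
      simp
    · rw [min_eq_left h, max_eq_left (by linarith)]
      congr 1; ring
  -- measurability of the maps
  have hdiag : Measurable fun x : X => (x, G x) := measurable_id.prodMk hG
  have hF : Measurable fun p : X × X => (p.1, G p.2) :=
    measurable_fst.prodMk (hG.comp measurable_snd)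
  have hZne : ENNReal.ofReal Z' ≠ 0 := by
    exact ne_of_gt (ENNReal.ofReal_pos.mpr hZ')
  have hZnt : ENNReal.ofReal Z' ≠ ⊤ := ENNReal.ofReal_ne_top
  -- first marginal
  have hfst : γ.map Prod.fst = μ := by
    rw [hγ, Measure.map_add _ _ measurable_fst, Measure.map_smul,
      Measure.map_map measurable_fst hdiag, Measure.map_map measurable_fst hF]
    have hc1 : (Prod.fst ∘ fun x : X => (x, G x)) = id := rfl
    have hc2 : (Prod.fst ∘ fun p : X × X => (p.1, G p.2)) = Prod.fst := rfl
    rw [hc1, hc2, Measure.map_id, Measure.map_fst_prod, hμ3mass, smul_smul,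
      ENNReal.inv_mul_cancel hZne hZnt, one_smul, hμ12]
  -- second marginal
  have hsnd : γ.map Prod.snd = ν := by
    rw [hγ, Measure.map_add _ _ measurable_snd, Measure.map_smul,
      Measure.map_map measurable_snd hdiag, Measure.map_map measurable_snd hF]
    have hc1 : (Prod.snd ∘ fun x : X => (x, G x)) = G := rfl
    have hc2 : (Prod.snd ∘ fun p : X × X => (p.1, G p.2)) = G ∘ Prod.snd := rfl
    rw [hc1, hc2, ← Measure.map_map hG measurable_snd, Measure.map_snd_prod, hμ2mass,
      Measure.map_smul, smul_smul, ENNReal.inv_mul_cancel hZne hZnt, one_smul,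
      ← Measure.map_add _ _ hG, hμ13, hν]
  -- probability measures
  have hνp : IsProbabilityMeasure ν := by
    constructor
    rw [hν, Measure.map_apply hG MeasurableSet.univ, Set.preimage_univ, hgmass]
  have hγp : IsProbabilityMeasure γ := by
    constructor
    have := congrArg (fun m : Measure X => m Set.univ) hfst
    simp only [Measure.map_apply measurable_fst MeasurableSet.univ, Set.preimage_univ] at this
    rw [this]
    exact measure_univ
  exact ⟨hZeq, hνp, hγp, hfst, hsnd⟩
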